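/- Let X be a metric space, K_A > 0, and let σ, τ : [0,c) → X be continuous curves such that for every s ∈ [0,c): lim_{h→0⁺} d(σ(s+h), Φ^{t+s}_h(σ(s)))/h = 0 and lim_{h→0⁺} d(τ(s+h), Φ^{t+s}_h(τ(s)))/h = 0, where Φ satisfies d(Φ^u_h(x), Φ^u_h(y)) ≤ d(x,y)(1+hK_A) for all relevant x, y, u, h. Then d(σ(s), τ(s)) ≤ e^{K_A s}·d(σ(0), τ(0)) for all s ∈ [0,c). -/

import Mathlib

/-- Continuous dependence on the initial point: two solution curves of an arc field
satisfying Condition A separate at most at exponential rate `e^{K_A s}`. -/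
theorem continuous_dependence {X : Type*} [MetricSpace X]
    (Φ : ℝ → X → ℝ → X) (K_A t c : ℝ) (hKA : 0 < K_A) (hc : 0 < c)
    (σ τ : ℝ → X)
    (hσcont : ContinuousOn σ (Set.Ico 0 c))
    (hτcont : ContinuousOn τ (Set.Ico 0 c))
    (hA : ∀ (u : ℝ) (x y : X) (h : ℝ), 0 ≤ h →
      dist (Φ u x h) (Φ u y h) ≤ dist x y * (1 + h * K_A))
    (hσ : ∀ s ∈ Set.Ico (0 : ℝ) c,
      Filter.Tendsto (fun h => dist (σ (s + h)) (Φ (t + s) (σ s) h) / h)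
        (nhdsWithin 0 (Set.Ioi 0)) (nhds 0))
    (hτ : ∀ s ∈ Set.Ico (0 : ℝ) c,
      Filter.Tendsto (fun h => dist (τ (s + h)) (Φ (t + s) (τ s) h) / h)
        (nhdsWithin 0 (Set.Ioi 0)) (nhds 0)) :
    ∀ s ∈ Set.Ico (0 : ℝ) c,
      dist (σ s) (τ s) ≤ Real.exp (K_A * s) * dist (σ 0) (τ 0) := by
  intro s hs
  obtain ⟨hs0, hsc⟩ := hs
  set f : ℝ → ℝ := fun u => dist (σ u) (τ u) with hf_def
  have hsub : Set.Icc (0:ℝ) s ⊆ Set.Ico 0 c := fun u hu =>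
    ⟨hu.1, lt_of_le_of_lt hu.2 hsc⟩
  have hfc : ContinuousOn f (Set.Icc 0 s) := fun u hu =>
    ((hσcont.mono hsub) u hu).dist ((hτcont.mono hsub) u hu)
  have key := le_gronwallBound_of_liminf_deriv_right_le
    (f := f) (f' := fun u => K_A * f u) (δ := f 0) (K := K_A) (ε := 0)
    (a := 0) (b := s) hfc ?_ le_rfl (fun x _ => by simp) s ⟨hs0, le_rfl⟩
  · rw [sub_zero, gronwallBound_ε0] at key
    linarith [key, mul_comm (f 0) (Real.exp (K_A * s))]
  · intro x hx r hr
    have hxc : x ∈ Set.Ico (0:ℝ) c := ⟨hx.1, lt_of_lt_of_le hx.2 hsc.le⟩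
    have hT : Filter.Tendsto (fun z => z - x) (nhdsWithin x (Set.Ioi x))
        (nhdsWithin 0 (Set.Ioi 0)) := by
      rw [tendsto_nhdsWithin_iff]
      constructor
      · have : Filter.Tendsto (fun z => z - x) (nhds x) (nhds 0) := by
          exact (continuous_sub_right x).tendsto' x 0 (sub_self x)
        exact this.mono_left nhdsWithin_le_nhds
      · filter_upwards [self_mem_nhdsWithin] with z hz
        exact sub_pos.mpr (show x < z from hz)
    -- the eventual bound in h
    set ε2 : ℝ := (r - K_A * f x) / 2 with hε2
    have hε2pos : 0 < ε2 := by
      have : 0 < r - K_A * f x := sub_pos.mpr hr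
      positivity
    have h1 : ∀ᶠ h in nhdsWithin (0:ℝ) (Set.Ioi 0),
        dist (σ (x + h)) (Φ (t + x) (σ x) h) / h < ε2 :=
      (hσ x hxc).eventually_lt_const hε2pos
    have h2 : ∀ᶠ h in nhdsWithin (0:ℝ) (Set.Ioi 0),
        dist (τ (x + h)) (Φ (t + x) (τ x) h) / h < ε2 :=
      (hτ x hxc).eventually_lt_const hε2pos
    have ev : ∀ᶠ h in nhdsWithin (0:ℝ) (Set.Ioi 0),
        h⁻¹ * (f (x + h) - f x) < r := by
      filter_upwards [h1, h2, self_mem_nhdsWithin] with h hq1 hq2 hh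
      have hh' : (0:ℝ) < h := hh
      have htri : f (x + h) ≤ dist (σ (x + h)) (Φ (t + x) (σ x) h)
          + dist (Φ (t + x) (σ x) h) (Φ (t + x) (τ x) h)
          + dist (Φ (t + x) (τ x) h) (τ (x + h)) :=
        dist_triangle4 _ _ _ _
      have hAx := hA (t + x) (σ x) (τ x) h hh'.le
      have hq1' : dist (σ (x + h)) (Φ (t + x) (σ x) h) < ε2 * h := by
        rw [div_lt_iff₀ hh'] at hq1; linarith
      have hq2' : dist (τ (x + h)) (Φ (t + x) (τ x) h) < ε2 * h := by
        rw [div_lt_iff₀ hh'] at hq2; linarith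
      have hfx : f (x + h) - f x < h * (2 * ε2 + K_A * f x) := by
        have : dist (Φ (t + x) (τ x) h) (τ (x + h))
            = dist (τ (x + h)) (Φ (t + x) (τ x) h) := dist_comm _ _
        have hfxeq : f x = dist (σ x) (τ x) := rfl
        nlinarith [htri, hAx, hq1', hq2']
      rw [inv_mul_lt_iff₀ hh']
      have : 2 * ε2 + K_A * f x = r := by rw [hε2]; ring
      calc f (x + h) - f x < h * (2 * ε2 + K_A * f x) := hfx
        _ = h * r := by rw [this]
    have := (hT.eventually ev).frequently
    refine this.mono ?_
    intro z hz
    simpa using hz
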